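/- For u ∈ [1/2, 1), the Fourier-defined fractional Laplacian coupling constants J(r) := −(1/2π)·∫_{−π}^{π} (1−cos θ)^u · cos(rθ) dθ are positive for every integer r ≥ 1, and satisfy J(r) ~ c(u)·r^{−(2u+1)} as r → ∞ for some constant c(u) > 0. -/

import Mathlib

open Real Filter intervalIntegral

/-- The Fourier-defined fractional Laplacian coupling constants
`J(r) = −(1/2π)·∫_{−π}^{π} (1−cos θ)^u · cos(rθ) dθ`. -/
noncomputable def fracJ (u : ℝ) (r : ℕ) : ℝ :=
  -(1 / (2 * Real.pi)) *
    ∫ θ in (-Real.pi)..Real.pi, (1 - Real.cos θ) ^ u * Real.cos (r * θ)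

lemma fracDeriv (u : ℝ) (hu : 0 < u) (r : ℕ) (θ : ℝ) (hθ : Real.cos θ < 1) :
    HasDerivAt (fun t => (1 - Real.cos t) ^ u * (Real.sin (t/2) * Real.cos (((r:ℝ)+1/2)*t)))
      ((1 - Real.cos θ) ^ u *
        ((u - r)/2 * Real.cos (r*θ) + (u + r + 1)/2 * Real.cos (((r:ℝ)+1)*θ))) θ := by
  have h1 : (0:ℝ) < 1 - Real.cos θ := by linarith
  have hd1 : HasDerivAt (fun t => 1 - Real.cos t) (Real.sin θ) θ := by
    simpa using (Real.hasDerivAt_cos θ).const_sub 1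
  have hd2 : HasDerivAt (fun t => (1 - Real.cos t) ^ u)
      (u * (1 - Real.cos θ) ^ (u - 1) * Real.sin θ) θ :=
    by have := (Real.hasDerivAt_rpow_const (p := u) (Or.inl h1.ne')).comp θ hd1; exact this
  have hd3 : HasDerivAt (fun t : ℝ => Real.sin (t/2)) (Real.cos (θ/2) * (1/2)) θ :=
    by have := (Real.hasDerivAt_sin (θ/2)).comp θ ((hasDerivAt_id θ).div_const 2); exact this
  have hd4 : HasDerivAt (fun t : ℝ => Real.cos (((r:ℝ)+1/2)*t))
      (-Real.sin (((r:ℝ)+1/2)*θ) * (((r:ℝ)+1/2) * 1)) θ :=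
    (Real.hasDerivAt_cos (((r:ℝ)+1/2)*θ)).comp θ ((hasDerivAt_id θ).const_mul ((r:ℝ)+1/2))
  have hd := hd2.fun_mul (hd3.fun_mul hd4)
  refine hd.congr_deriv ?_
  symm
  have hss : Real.sin (θ/2) ^ 2 = (1 - Real.cos θ) / 2 := by
    have h := Real.cos_sq (θ/2)
    rw [show 2 * (θ/2) = θ by ring] at h
    nlinarith [Real.sin_sq_add_cos_sq (θ/2)]
  have hsin : Real.sin θ * Real.sin (θ/2) = (1 - Real.cos θ) * Real.cos (θ/2) := by
    have h2 : Real.sin θ = 2 * Real.sin (θ/2) * Real.cos (θ/2) := by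
      have := Real.sin_two_mul (θ/2); rw [show 2*(θ/2) = θ by ring] at this; linarith
    linear_combination Real.sin (θ/2) * h2 + 2 * Real.cos (θ/2) * hss
  have hpow : (1 - Real.cos θ) ^ (u - 1) * (1 - Real.cos θ) = (1 - Real.cos θ) ^ u := by
    have := (Real.rpow_add h1 (u-1) 1).symm
    simpa [Real.rpow_one, sub_add_cancel] using this
  have hcc : Real.cos (θ/2) * Real.cos (((r:ℝ)+1/2)*θ)
      = (Real.cos ((r:ℝ)*θ) + Real.cos (((r:ℝ)+1)*θ)) / 2 := by
    have := Real.cos_add_cos (((r:ℝ)+1)*θ) ((r:ℝ)*θ)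
    rw [show (((r:ℝ)+1)*θ + (r:ℝ)*θ)/2 = ((r:ℝ)+1/2)*θ by ring,
        show (((r:ℝ)+1)*θ - (r:ℝ)*θ)/2 = θ/2 by ring] at this
    linarith [this]
  have hsS : Real.sin (θ/2) * Real.sin (((r:ℝ)+1/2)*θ)
      = (Real.cos ((r:ℝ)*θ) - Real.cos (((r:ℝ)+1)*θ)) / 2 := by
    have := Real.cos_sub_cos (((r:ℝ)+1)*θ) ((r:ℝ)*θ)
    rw [show (((r:ℝ)+1)*θ + (r:ℝ)*θ)/2 = ((r:ℝ)+1/2)*θ by ring,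
        show (((r:ℝ)+1)*θ - (r:ℝ)*θ)/2 = θ/2 by ring] at this
    linarith [this]
  have expand : u * (1 - Real.cos θ) ^ (u - 1) * Real.sin θ *
        (Real.sin (θ/2) * Real.cos (((r:ℝ)+1/2)*θ))
      = (1 - Real.cos θ) ^ u * (u * (Real.cos (θ/2) * Real.cos (((r:ℝ)+1/2)*θ))) := by
    rw [← hpow]
    linear_combination (u * (1 - Real.cos θ) ^ (u-1) * Real.cos (((r:ℝ)+1/2)*θ)) * hsin
  linear_combination (-1 : ℝ) * expand
    - ((1 - Real.cos θ)^u * (u + 1/2)) * hcc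
    + ((1 - Real.cos θ)^u * ((r:ℝ) + 1/2)) * hsS

lemma fracCont (u : ℝ) (hu : 0 < u) :
    Continuous (fun θ : ℝ => (1 - Real.cos θ) ^ u) := by
  apply Continuous.rpow_const (by continuity)
  intro x; right; exact hu.le

lemma cos_half_pi_mul (r : ℕ) : Real.cos (((r:ℝ)+1/2) * Real.pi) = 0 := by
  rw [show ((r:ℝ)+1/2) * Real.pi = (r:ℝ) * Real.pi + Real.pi/2 by ring]
  rw [Real.cos_add_pi_div_two, Real.sin_nat_mul_pi]
  ring

lemma cos_half_pi_mul_neg (r : ℕ) : Real.cos (((r:ℝ)+1/2) * -Real.pi) = 0 := by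
  rw [show ((r:ℝ)+1/2) * -Real.pi = -(((r:ℝ)+1/2) * Real.pi) by ring, Real.cos_neg]
  exact cos_half_pi_mul r

lemma fracKey (u : ℝ) (hu : 0 < u) (r : ℕ) :
    ∫ θ in (-Real.pi)..Real.pi, (1 - Real.cos θ) ^ u *
      ((u - r)/2 * Real.cos (r*θ) + (u + r + 1)/2 * Real.cos (((r:ℝ)+1)*θ)) = 0 := by
  have hcontD : Continuous (fun θ : ℝ => (1 - Real.cos θ) ^ u *
      ((u - r)/2 * Real.cos (r*θ) + (u + r + 1)/2 * Real.cos (((r:ℝ)+1)*θ))) := by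
    exact (fracCont u hu).mul (by continuity)
  have hcontH : Continuous (fun t : ℝ =>
      (1 - Real.cos t) ^ u * (Real.sin (t/2) * Real.cos (((r:ℝ)+1/2)*t))) := by
    exact (fracCont u hu).mul (by continuity)
  have hpi := Real.pi_pos
  have hI1 : ∫ θ in (0:ℝ)..Real.pi, (1 - Real.cos θ) ^ u *
      ((u - r)/2 * Real.cos (r*θ) + (u + r + 1)/2 * Real.cos (((r:ℝ)+1)*θ)) = 0 := by
    rw [intervalIntegral.integral_eq_sub_of_hasDerivAt_of_le hpi.le
      (hcontH.continuousOn)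
      (fun θ hθ => fracDeriv u hu r θ (by
        have : Real.cos θ < Real.cos 0 :=
          Real.cos_lt_cos_of_nonneg_of_le_pi le_rfl hθ.2.le hθ.1
        simpa using this))
      (hcontD.intervalIntegrable _ _)]
    rw [cos_half_pi_mul r]; simp
  have hI2 : ∫ θ in (-Real.pi)..(0:ℝ), (1 - Real.cos θ) ^ u *
      ((u - r)/2 * Real.cos (r*θ) + (u + r + 1)/2 * Real.cos (((r:ℝ)+1)*θ)) = 0 := by
    rw [intervalIntegral.integral_eq_sub_of_hasDerivAt_of_le (by linarith)
      (hcontH.continuousOn)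
      (fun θ hθ => fracDeriv u hu r θ (by
        have h1 : Real.cos (-θ) < Real.cos 0 :=
          Real.cos_lt_cos_of_nonneg_of_le_pi le_rfl (by linarith [hθ.1]) (by linarith [hθ.2])
        rw [Real.cos_neg] at h1; simpa using h1))
      (hcontD.intervalIntegrable _ _)]
    rw [cos_half_pi_mul_neg r]; simp
  rw [← intervalIntegral.integral_add_adjacent_intervals
    (hcontD.intervalIntegrable (-Real.pi) 0) (hcontD.intervalIntegrable 0 Real.pi),
    hI1, hI2]
  ring

lemma fracRec (u : ℝ) (hu : 0 < u) (r : ℕ) :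
    fracJ u (r+1) = (((r:ℝ) - u)/((r:ℝ) + u + 1)) * fracJ u r := by
  have hC : ∀ s : ℝ, Continuous fun θ : ℝ => (1 - Real.cos θ)^u * Real.cos (s*θ) :=
    fun s => (fracCont u hu).mul (by continuity)
  have key := fracKey u hu r
  have e : ∀ θ : ℝ, (1 - Real.cos θ)^u *
        ((u - r)/2 * Real.cos (r*θ) + (u + r + 1)/2 * Real.cos (((r:ℝ)+1)*θ))
      = (u - r)/2 * ((1 - Real.cos θ)^u * Real.cos ((r:ℝ)*θ))
        + (u + r + 1)/2 * ((1 - Real.cos θ)^u * Real.cos (((r:ℝ)+1)*θ)) := fun θ => by ring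
  simp_rw [e] at key
  rw [intervalIntegral.integral_add
      (f := fun θ => (u - r)/2 * ((1 - Real.cos θ)^u * Real.cos ((r:ℝ)*θ)))
      (g := fun θ => (u + r + 1)/2 * ((1 - Real.cos θ)^u * Real.cos (((r:ℝ)+1)*θ)))
      ((continuous_const.mul (hC _)).intervalIntegrable _ _)
      ((continuous_const.mul (hC _)).intervalIntegrable _ _),
    intervalIntegral.integral_const_mul, intervalIntegral.integral_const_mul] at key
  unfold fracJ
  have hcast : ((r+1 : ℕ):ℝ) = (r:ℝ)+1 := by push_cast; ring
  rw [hcast]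
  have hden : (r:ℝ) + u + 1 ≠ 0 := by positivity
  have hpi := Real.pi_ne_zero
  field_simp
  linear_combination (-2) * key

lemma fracJ_one_pos (u : ℝ) (hu : 0 < u) (hu1 : u < 1) : 0 < fracJ u 1 := by
  have hpi := Real.pi_pos
  have hCont : Continuous (fun θ : ℝ => (1 - Real.cos θ) ^ u) := fracCont u hu
  have hI0 : 0 < ∫ θ in (-Real.pi)..Real.pi, (1 - Real.cos θ) ^ u := by
    rw [← intervalIntegral.integral_add_adjacent_intervals
      (hCont.intervalIntegrable (-Real.pi) 0) (hCont.intervalIntegrable 0 Real.pi)]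
    have h2 : 0 < ∫ θ in (0:ℝ)..Real.pi, (1 - Real.cos θ) ^ u := by
      apply intervalIntegral.intervalIntegral_pos_of_pos_on
        (hCont.intervalIntegrable 0 Real.pi) _ hpi
      intro x hx
      have : Real.cos x < Real.cos 0 :=
        Real.cos_lt_cos_of_nonneg_of_le_pi le_rfl hx.2.le hx.1
      rw [Real.cos_zero] at this
      exact Real.rpow_pos_of_pos (by linarith) u
    have h1 : 0 ≤ ∫ θ in (-Real.pi)..(0:ℝ), (1 - Real.cos θ) ^ u := by
      apply intervalIntegral.integral_nonneg (by linarith)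
      intro x _
      exact Real.rpow_nonneg (by nlinarith [Real.cos_le_one x]) u
    linarith
  have hJ0 : fracJ u 0 < 0 := by
    unfold fracJ
    have : ∀ θ : ℝ, (1 - Real.cos θ) ^ u * Real.cos ((0:ℕ) * θ) = (1 - Real.cos θ) ^ u := by
      intro θ; simp
    simp_rw [this]
    have h2 : 0 < 1/(2*Real.pi) := by positivity
    nlinarith
  have := fracRec u hu 0
  simp only [Nat.cast_zero] at this
  rw [zero_add] at this
  rw [this]
  have : (0 - u)/(0 + u + 1) < 0 := by
    apply div_neg_of_neg_of_pos <;> linarith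
  nlinarith

lemma fracJ_pos (u : ℝ) (hu : 0 < u) (hu1 : u < 1) : ∀ r : ℕ, 1 ≤ r → 0 < fracJ u r := by
  intro r hr
  induction r with
  | zero => omega
  | succ n ih =>
    rcases Nat.eq_or_lt_of_le hr with h | h
    · rw [← h]; exact fracJ_one_pos u hu hu1
    · have hn : 1 ≤ n := by omega
      have hpos := ih hn
      rw [fracRec u hu n]
      have hnum : 0 < (n:ℝ) - u := by
        have : (1:ℝ) ≤ (n:ℝ) := by exact_mod_cast hn
        linarith
      have hden : 0 < (n:ℝ) + u + 1 := by positivity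
      positivity

lemma fracClosed (u : ℝ) (hu : 0 < u) (n : ℕ) :
    fracJ u (n+1) = fracJ u 1 *
      ∏ j ∈ Finset.range n, (((j:ℝ)+1) - u)/(((j:ℝ)+1) + u + 1) := by
  induction n with
  | zero => simp
  | succ m ih =>
    rw [show m + 1 + 1 = (m+1) + 1 from rfl, fracRec u hu (m+1), ih,
      Finset.prod_range_succ]
    push_cast
    ring

lemma fracForm (u : ℝ) (hu : 0 < u) (hu1 : u < 1) (m : ℕ) (hm : 1 ≤ m) :
    fracJ u (m+2) = fracJ u 1 * (Real.GammaSeq (2+u) m / Real.GammaSeq (1-u) m) *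
      ((m:ℝ)^(1-u) / (m:ℝ)^(2+u)) := by
  have h := fracClosed u hu (m+1)
  rw [show m + 2 = (m+1) + 1 from rfl, h]
  have e : ∀ j ∈ Finset.range (m+1),
      (((j:ℝ)+1) - u)/(((j:ℝ)+1) + u + 1) = ((1-u) + (j:ℝ))/((2+u) + (j:ℝ)) := by
    intro j _; ring_nf
  rw [Finset.prod_congr rfl e, Finset.prod_div_distrib]
  have hm0 : (0:ℝ) < (m:ℝ) := by exact_mod_cast hm
  have hu1' : (0:ℝ) < 1 - u := by linarith
  have hP1 : (0:ℝ) < ∏ j ∈ Finset.range (m+1), ((1-u) + (j:ℝ)) :=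
    Finset.prod_pos (fun j _ => by positivity)
  have hP2 : (0:ℝ) < ∏ j ∈ Finset.range (m+1), ((2+u) + (j:ℝ)) :=
    Finset.prod_pos (fun j _ => by positivity)
  have hr1 : (0:ℝ) < (m:ℝ) ^ (1-u) := Real.rpow_pos_of_pos hm0 _
  have hr2 : (0:ℝ) < (m:ℝ) ^ (2+u) := Real.rpow_pos_of_pos hm0 _
  have hfac : (0:ℝ) < (Nat.factorial m : ℝ) := by exact_mod_cast Nat.factorial_pos m
  unfold Real.GammaSeq
  field_simp [hP1.ne', hP2.ne', hr1.ne', hr2.ne', hfac.ne']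

lemma fracAux_tendsto (u : ℝ) (hu : 0 < u) (hu1 : u < 1) :
    Filter.Tendsto (fun m : ℕ => fracJ u 1 *
        (Real.GammaSeq (2+u) m / Real.GammaSeq (1-u) m) *
        (((m:ℝ)+2)^(2*u+1) * ((m:ℝ)^(1-u) / (m:ℝ)^(2+u))))
      Filter.atTop (nhds (fracJ u 1 * (Real.Gamma (2+u) / Real.Gamma (1-u)))) := by
  have hG1 : (0:ℝ) < Real.Gamma (1-u) := Real.Gamma_pos_of_pos (by linarith)
  have hT1 : Filter.Tendsto (fun m : ℕ => fracJ u 1 *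
      (Real.GammaSeq (2+u) m / Real.GammaSeq (1-u) m)) Filter.atTop
      (nhds (fracJ u 1 * (Real.Gamma (2+u) / Real.Gamma (1-u)))) :=
    Filter.Tendsto.const_mul _
      ((Real.GammaSeq_tendsto_Gamma (2+u)).div (Real.GammaSeq_tendsto_Gamma (1-u)) hG1.ne')
  have hT2 : Filter.Tendsto (fun m : ℕ =>
      (((m:ℝ)+2)^(2*u+1) * ((m:ℝ)^(1-u) / (m:ℝ)^(2+u)))) Filter.atTop (nhds 1) := by
    have hbase : Filter.Tendsto (fun m : ℕ => ((m:ℝ)+2)/(m:ℝ)) Filter.atTop (nhds 1) := by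
      have h0 : Filter.Tendsto (fun m : ℕ => 1 + 2/(m:ℝ)) Filter.atTop (nhds (1+0)) :=
        tendsto_const_nhds.add (tendsto_const_div_atTop_nhds_zero_nat 2)
      rw [add_zero] at h0
      apply h0.congr'
      filter_upwards [Filter.eventually_ge_atTop 1] with m hm
      have hm0 : (0:ℝ) < (m:ℝ) := by exact_mod_cast hm
      field_simp
    have hr := hbase.rpow_const (p := 2*u+1) (Or.inl one_ne_zero)
    rw [Real.one_rpow] at hr
    apply hr.congr'
    filter_upwards [Filter.eventually_ge_atTop 1] with m hm
    have hm0 : (0:ℝ) < (m:ℝ) := by exact_mod_cast hm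
    rw [Real.div_rpow (by positivity) hm0.le]
    rw [div_eq_mul_inv, ← Real.rpow_neg hm0.le]
    congr 1
    rw [← Real.rpow_sub hm0]
    congr 1
    ring
  have := hT1.mul hT2
  rw [mul_one] at this
  exact this

theorem fracJ_tendsto (u : ℝ) (hu : 0 < u) (hu1 : u < 1) :
    ∃ c : ℝ, 0 < c ∧
      Filter.Tendsto (fun r : ℕ => fracJ u r * (r : ℝ) ^ (2 * u + 1))
        Filter.atTop (nhds c) := by
  refine ⟨fracJ u 1 * (Real.Gamma (2+u) / Real.Gamma (1-u)), ?_, ?_⟩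
  · have h1 := fracJ_one_pos u hu hu1
    have h2 := Real.Gamma_pos_of_pos (show (0:ℝ) < 2+u by linarith)
    have h3 := Real.Gamma_pos_of_pos (show (0:ℝ) < 1-u by linarith)
    positivity
  · have hcomp := (fracAux_tendsto u hu hu1).comp (Filter.tendsto_sub_atTop_nat 2)
    apply hcomp.congr'
    filter_upwards [Filter.eventually_ge_atTop 3] with r hr
    have hm : 1 ≤ r - 2 := by omega
    have hr2 : r - 2 + 2 = r := by omega
    have hcast : ((r:ℝ)) = (((r-2 : ℕ):ℝ) + 2) := by
      have : ((r - 2 + 2 : ℕ) : ℝ) = (r:ℝ) := by rw [hr2]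
      push_cast at this
      linarith
    simp only [Function.comp_apply]
    rw [show fracJ u r = fracJ u ((r-2)+2) by rw [hr2], fracForm u hu hu1 (r-2) hm, hcast]
    ring

/-- For `u ∈ [1/2, 1)`, the coupling constants `J(r)` are positive for every
integer `r ≥ 1`, and satisfy `J(r) ~ c(u)·r^{−(2u+1)}` as `r → ∞` for some
constant `c(u) > 0`. -/
theorem fracJ_pos_and_asymptotics (u : ℝ) (hu : u ∈ Set.Ico (1 / 2 : ℝ) 1) :
    (∀ r : ℕ, 1 ≤ r → 0 < fracJ u r) ∧
    ∃ c : ℝ, 0 < c ∧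
      Filter.Tendsto (fun r : ℕ => fracJ u r * (r : ℝ) ^ (2 * u + 1))
        Filter.atTop (nhds c) := by
  obtain ⟨hu2, hu1⟩ := hu
  have hu0 : 0 < u := lt_of_lt_of_le (by norm_num) hu2
  exact ⟨fracJ_pos u hu0 hu1, fracJ_tendsto u hu0 hu1⟩
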